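/- Let 0 < a < b and let Q = U(a, b) be the uniform distribution on (a, b), regarded as a second-order distribution over the variance parameter v of a zero-mean Gaussian predictive distribution N(0, v). Then the entropy-based epistemic uncertainty equals ∫ KL(N(0,v) ‖ N(0,v̄)) dQ(v) = ½·( log((a+b)/2) − (b·log b − a·log a)/(b−a) + 1 ), where v̄ = (a+b)/2 and KL(N(0,v) ‖ N(0,v̄)) = ½·(log(v̄/v) + v/v̄ − 1). -/

import Mathlib

open MeasureTheory Real

/-- For the uniform second-order distribution `U(a,b)` (with `0 < a < b`) over the
variance parameter `v` of a zero-mean Gaussian predictive distribution, the Q-mean of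
`v` is `v̄ = (a+b)/2` and the entropy-based epistemic uncertainty
`∫ KL(N(0,v) ‖ N(0,v̄)) dQ(v)`, with `KL(N(0,v) ‖ N(0,v̄)) = ½(log(v̄/v) + v/v̄ - 1)`,
equals `½(log((a+b)/2) - (b log b - a log a)/(b-a) + 1)`. -/
theorem entropy_EU_uniform (a b : ℝ) (ha : 0 < a) (hab : a < b)
    (Q : Measure ℝ) (hQ : Q = (ENNReal.ofReal (b - a))⁻¹ • volume.restrict (Set.Ioo a b)) :
    (∫ v, v ∂Q = (a + b) / 2) ∧
    (∫ v, (1 / 2) * (Real.log (((a + b) / 2) / v) + v / ((a + b) / 2) - 1) ∂Q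
      = (1 / 2) * (Real.log ((a + b) / 2)
          - (b * Real.log b - a * Real.log a) / (b - a) + 1)) := by
  subst hQ
  have hba : 0 < b - a := sub_pos.mpr hab
  have hc : (0:ℝ) < (a + b) / 2 := by linarith
  have hab0 : (0:ℝ) < a + b := by linarith
  have hb : (0:ℝ) < b := ha.trans hab
  have htoReal : ((ENNReal.ofReal (b - a))⁻¹).toReal = (b - a)⁻¹ := by
    rw [ENNReal.toReal_inv, ENNReal.toReal_ofReal hba.le]
  have hI1 : ∫ v in Set.Ioo a b, v = (b ^ 2 - a ^ 2) / 2 := by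
    rw [← MeasureTheory.integral_Ioc_eq_integral_Ioo,
      ← intervalIntegral.integral_of_le hab.le]
    simp [integral_id]
    try ring
  constructor
  · rw [integral_smul_measure, htoReal, hI1]
    simp only [smul_eq_mul]
    field_simp
    ring
  · set c1 : ℝ := (1/2) * Real.log ((a+b)/2) - 1/2 with hc1
    have hcongr : ∫ v in Set.Ioo a b,
        (1 / 2) * (Real.log (((a + b) / 2) / v) + v / ((a + b) / 2) - 1)
        = ∫ v in Set.Ioo a b, (c1 + ((1/(a+b)) * v - (1/2) * Real.log v)) := by
      apply setIntegral_congr_fun measurableSet_Ioo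
      intro v hv
      have hv0 : 0 < v := ha.trans hv.1
      simp only [hc1]
      rw [Real.log_div hc.ne' hv0.ne']
      field_simp
      ring
    have hnz : ∀ x ∈ Set.uIcc a b, x ≠ 0 := by
      intro x hx
      rw [Set.uIcc_of_le hab.le] at hx
      exact (ha.trans_le hx.1).ne'
    have key : ∫ v in a..b, (c1 + ((1/(a+b)) * v - (1/2) * Real.log v))
        = (c1 * b + (1/(a+b)) * b^2/2 - (1/2) * (b * Real.log b - b))
          - (c1 * a + (1/(a+b)) * a^2/2 - (1/2) * (a * Real.log a - a)) := by
      apply intervalIntegral.integral_eq_sub_of_hasDerivAt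
        (f := fun v => c1 * v + (1/(a+b)) * v^2/2 - (1/2) * (v * Real.log v - v))
      · intro x hx
        have hx0 : x ≠ 0 := hnz x hx
        have h1 : HasDerivAt (fun v : ℝ => c1 * v) c1 x := by
          simpa using (hasDerivAt_id x).const_mul c1
        have h2 : HasDerivAt (fun v : ℝ => (1/(a+b)) * v^2/2) ((1/(a+b)) * x) x := by
          have := ((hasDerivAt_pow 2 x).const_mul (1/(a+b))).div_const 2
          simpa using this.congr_deriv (by ring)
        have h3 : HasDerivAt (fun v : ℝ => (1/2) * (v * Real.log v - v))
            ((1/2) * Real.log x) x := by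
          have hm := (Real.hasDerivAt_mul_log hx0).sub (hasDerivAt_id x)
          have := hm.const_mul (1/2 : ℝ)
          simpa using this.congr_deriv (by ring)
        exact ((h1.add h2).sub h3).congr_deriv (by ring)
      · apply ContinuousOn.intervalIntegrable
        apply ContinuousOn.add continuousOn_const
        apply ContinuousOn.sub (continuousOn_const.mul (continuousOn_id))
        exact continuousOn_const.mul (Real.continuousOn_log.mono (by
          intro x hx; exact hnz x hx))
    rw [integral_smul_measure, htoReal, hcongr,
      ← MeasureTheory.integral_Ioc_eq_integral_Ioo,
      ← intervalIntegral.integral_of_le hab.le, key, hc1]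
    simp only [smul_eq_mul]
    field_simp
    ring
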